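/- Let T : ℝ² → ℝ² be given by T(x) = (½(x₁+x₂) − arctan(½(x₂−x₁)), ½(x₁+x₂) + arctan(½(x₂−x₁))) and let f := exp ∘ T ∘ log : ℝ²_{>0} → ℝ²_{>0}. Then f is order-preserving and homogeneous, and for x = (e^{−1}, e) the iterates f^k(x) converge to the fixed point (1,1) of f, but limsup_{k→∞} d_T(f^k(x), (1,1))^{1/k} = 1; that is, the convergence is not at a linear rate in Thompson's metric. -/

import Mathlib

open Filter Topology

/-- `M(x/y) = inf {β > 0 : x ≤ β y}` for the entrywise order on ℝ². -/
noncomputable def Mratio2 (x y : ℝ × ℝ) : ℝ :=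
  sInf {β : ℝ | 0 < β ∧ x ≤ β • y}

/-- Thompson's metric on the positive cone of ℝ². -/
noncomputable def thompsonDist2 (x y : ℝ × ℝ) : ℝ :=
  max (Real.log (Mratio2 x y)) (Real.log (Mratio2 y x))

lemma aux_sub_arctan_mono : Monotone (fun t : ℝ => t - Real.arctan t) := by
  have hd : ∀ t : ℝ, HasDerivAt (fun t : ℝ => t - Real.arctan t) (1 - 1/(1+t^2)) t :=
    fun t => (hasDerivAt_id t).sub (Real.hasDerivAt_arctan t)
  apply monotone_of_deriv_nonneg
  · exact fun t => ((hd t).differentiableAt)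
  · intro t
    rw [(hd t).deriv]
    have h1 : (0:ℝ) < 1 + t^2 := by positivity
    rw [sub_nonneg, div_le_one h1]
    nlinarith [sq_nonneg t]

lemma aux_arctan_sub_le {a b : ℝ} (h : a ≤ b) : Real.arctan b - Real.arctan a ≤ b - a := by
  have := aux_sub_arctan_mono h
  simp only at this
  linarith

lemma aux_arctan_cubic : Monotone (fun t : ℝ => Real.arctan t - (t - t^3/3)) := by
  have hd : ∀ t : ℝ, HasDerivAt (fun t : ℝ => Real.arctan t - (t - t^3/3))
      (1/(1+t^2) - (1 - (3 * t^2)/3)) t := by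
    intro t
    exact (Real.hasDerivAt_arctan t).sub
      ((hasDerivAt_id t).sub (((hasDerivAt_pow 3 t).div_const 3))) |>.congr_deriv (by push_cast; ring)
  apply monotone_of_deriv_nonneg
  · exact fun t => ((hd t).differentiableAt)
  · intro t
    rw [(hd t).deriv]
    have h1 : (0:ℝ) < 1 + t^2 := by positivity
    rw [sub_nonneg, le_div_iff₀ h1]
    nlinarith [sq_nonneg (t^2)]

lemma aux_arctan_ge {t : ℝ} (ht : 0 ≤ t) : t - t^3/3 ≤ Real.arctan t := by
  have := aux_arctan_cubic ht
  simp only [Real.arctan_zero] at this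
  norm_num at this
  linarith

lemma aux_arctan_lt_self {x : ℝ} (hx : 0 < x) : Real.arctan x < x := by
  have h1 : 0 < Real.arctan x := by
    rw [← Real.arctan_zero]; exact Real.arctan_strictMono hx
  have h2 := Real.lt_tan h1 (Real.arctan_lt_pi_div_two x)
  rwa [Real.tan_arctan] at h2

noncomputable def aseq : ℕ → ℝ := fun k => Real.arctan^[k] 1

lemma aseq_zero : aseq 0 = 1 := rfl

lemma aseq_succ (k : ℕ) : aseq (k+1) = Real.arctan (aseq k) := by
  rw [aseq, Function.iterate_succ_apply']; rfl

lemma aseq_pos : ∀ k, 0 < aseq k := by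
  intro k; induction k with
  | zero => norm_num [aseq_zero]
  | succ n ih =>
    rw [aseq_succ, ← Real.arctan_zero]
    exact Real.arctan_strictMono ih

lemma aseq_le_one : ∀ k, aseq k ≤ 1 := by
  intro k; induction k with
  | zero => simp [aseq_zero]
  | succ n ih =>
    rw [aseq_succ]
    exact le_trans (aux_arctan_lt_self (aseq_pos n)).le ih

lemma aseq_anti : ∀ k, aseq (k+1) ≤ aseq k := by
  intro k; rw [aseq_succ]; exact (aux_arctan_lt_self (aseq_pos k)).le

lemma aseq_lb : ∀ k : ℕ, ((k:ℝ)+1)⁻¹ ≤ aseq k := by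
  intro k; induction k with
  | zero => simp [aseq_zero]
  | succ n ih =>
    rw [aseq_succ]
    have h1 : Real.arctan (((n:ℝ)+1)⁻¹) ≤ Real.arctan (aseq n) :=
      Real.arctan_strictMono.monotone ih
    refine le_trans ?_ h1
    set c : ℝ := (n:ℝ)+1 with hc
    have hc1 : (1:ℝ) ≤ c := by simp [hc]
    have hcpos : (0:ℝ) < c := by linarith
    have h2 : c⁻¹ - (c⁻¹)^3/3 ≤ Real.arctan c⁻¹ := aux_arctan_ge (by positivity)
    refine le_trans ?_ h2
    have hcast : ((n+1:ℕ):ℝ)+1 = c+1 := by push_cast [hc]; ring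
    rw [hcast]
    rw [inv_eq_one_div, inv_eq_one_div, div_le_iff₀ (by linarith)]
    field_simp
    nlinarith [hc1, hcpos, sq_nonneg c, mul_le_mul_of_nonneg_left (mul_le_mul_of_nonneg_left hc1 hcpos.le) hcpos.le]

lemma aseq_tendsto : Tendsto aseq atTop (𝓝 0) := by
  have hanti : Antitone aseq := antitone_nat_of_succ_le aseq_anti
  have hbdd : BddBelow (Set.range aseq) := ⟨0, by rintro x ⟨k, rfl⟩; exact (aseq_pos k).le⟩
  have hL := tendsto_atTop_ciInf hanti hbdd
  set L := ⨅ k, aseq k with hLdef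
  have hL0 : 0 ≤ L := le_ciInf fun k => (aseq_pos k).le
  have h1 : Tendsto (fun k => aseq (k+1)) atTop (𝓝 L) := hL.comp (tendsto_add_atTop_nat 1)
  have h2 : Tendsto (fun k => Real.arctan (aseq k)) atTop (𝓝 (Real.arctan L)) :=
    (Real.continuous_arctan.tendsto L).comp hL
  have h3 : Real.arctan L = L := by
    apply tendsto_nhds_unique _ h1
    simpa only [aseq_succ] using h2
  have : L = 0 := by
    by_contra h
    have hLpos : 0 < L := lt_of_le_of_ne hL0 (Ne.symm h)
    exact absurd h3 (ne_of_lt (aux_arctan_lt_self hLpos))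
  rwa [this] at hL

lemma mratio_left {a : ℝ} (ha : 0 ≤ a) :
    Mratio2 (Real.exp (-a), Real.exp a) (1, 1) = Real.exp a := by
  have hset : {β : ℝ | 0 < β ∧ (Real.exp (-a), Real.exp a) ≤ β • ((1:ℝ), (1:ℝ))}
      = Set.Ici (Real.exp a) := by
    ext β
    simp only [Set.mem_setOf_eq, Set.mem_Ici, Prod.smul_mk, smul_eq_mul, mul_one, Prod.mk_le_mk]
    constructor
    · rintro ⟨-, -, h2⟩; exact h2
    · intro h
      exact ⟨lt_of_lt_of_le (Real.exp_pos a) h,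
        le_trans (Real.exp_le_exp.2 (by linarith)) h, h⟩
  rw [Mratio2, hset, csInf_Ici]

lemma mratio_right {a : ℝ} (ha : 0 ≤ a) :
    Mratio2 (1, 1) (Real.exp (-a), Real.exp a) = Real.exp a := by
  have key : Real.exp (-a) * Real.exp a = 1 := by rw [← Real.exp_add]; simp
  have hea : (1:ℝ) ≤ Real.exp a := Real.one_le_exp ha
  have hpos := Real.exp_pos a
  have hpos' := Real.exp_pos (-a)
  have hset : {β : ℝ | 0 < β ∧ ((1:ℝ), (1:ℝ)) ≤ β • (Real.exp (-a), Real.exp a)}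
      = Set.Ici (Real.exp a) := by
    ext β
    simp only [Set.mem_setOf_eq, Set.mem_Ici, Prod.smul_mk, smul_eq_mul, Prod.mk_le_mk]
    constructor
    · rintro ⟨hβ, h1, h2⟩
      nlinarith
    · intro h
      refine ⟨lt_of_lt_of_le hpos h, ?_, ?_⟩ <;> nlinarith
  rw [Mratio2, hset, csInf_Ici]

lemma thompson_calc {a : ℝ} (ha : 0 ≤ a) :
    thompsonDist2 (Real.exp (-a), Real.exp a) (1, 1) = a := by
  rw [thompsonDist2, mratio_left ha, mratio_right ha, Real.log_exp, max_self]

lemma aseq_rpow_tendsto : Tendsto (fun k : ℕ => aseq k ^ ((k:ℝ)⁻¹)) atTop (𝓝 1) := by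
  have hlog : Tendsto (fun k : ℕ => Real.log ((k:ℝ)+1) / (k:ℝ)) atTop (𝓝 0) := by
    have h0 := Real.tendsto_pow_log_div_mul_add_atTop 1 (-1) 1 one_ne_zero
    have hcomp : Tendsto (fun k : ℕ => (k:ℝ)+1) atTop atTop :=
      tendsto_atTop_add_const_right _ 1 tendsto_natCast_atTop_atTop
    have h1 := h0.comp hcomp
    refine h1.congr fun k => ?_
    simp only [Function.comp_apply, pow_one]
    norm_num
  set L : ℕ → ℝ := fun k => (((k:ℝ))+1)⁻¹ ^ ((k:ℝ)⁻¹) with hLdef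
  have hLeq : ∀ k : ℕ, L k = Real.exp (-(Real.log ((k:ℝ)+1) / (k:ℝ))) := by
    intro k
    rw [hLdef]
    simp only
    rw [Real.rpow_def_of_pos (by positivity), Real.log_inv, div_eq_mul_inv]
    congr 1; ring
  have hLtend : Tendsto L atTop (𝓝 1) := by
    rw [funext hLeq]
    have hneg : Tendsto (fun k : ℕ => -(Real.log ((k:ℝ)+1) / (k:ℝ))) atTop (𝓝 0) := by
      simpa using hlog.neg
    have := (Real.continuous_exp.tendsto 0).comp hneg
    simpa [Function.comp_def] using this
  apply tendsto_of_tendsto_of_tendsto_of_le_of_le' hLtend tendsto_const_nhds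
  · filter_upwards with k
    exact Real.rpow_le_rpow (by positivity) (aseq_lb k) (by positivity)
  · filter_upwards with k
    exact Real.rpow_le_one (aseq_pos k).le (aseq_le_one k) (by positivity)

/-- with T(x) = (½(x₁+x₂) − arctan(½(x₂−x₁)), ½(x₁+x₂) + arctan(½(x₂−x₁)))
and f = exp ∘ T ∘ log on ℝ²_{>0}, f is order-preserving and homogeneous, the iterates of
x = (e⁻¹, e) converge to the fixed point (1,1), but
limsup d_T(f^k(x), (1,1))^{1/k} = 1: the convergence is not R-linear. -/
theorem arctan_example_sublinear_convergence
    (T : ℝ × ℝ → ℝ × ℝ)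
    (hT : ∀ p : ℝ × ℝ,
      T p = ((p.1 + p.2) / 2 - Real.arctan ((p.2 - p.1) / 2),
             (p.1 + p.2) / 2 + Real.arctan ((p.2 - p.1) / 2)))
    (f : ℝ × ℝ → ℝ × ℝ)
    (hf : ∀ p : ℝ × ℝ,
      f p = (Real.exp ((T (Real.log p.1, Real.log p.2)).1),
             Real.exp ((T (Real.log p.1, Real.log p.2)).2))) :
    (∀ p q : ℝ × ℝ, 0 < p.1 → 0 < p.2 → 0 < q.1 → 0 < q.2 → p ≤ q → f p ≤ f q) ∧
    (∀ p : ℝ × ℝ, 0 < p.1 → 0 < p.2 → ∀ t : ℝ, 0 < t → f (t • p) = t • f p) ∧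
    f (1, 1) = (1, 1) ∧
    Tendsto (fun k => f^[k] (Real.exp (-1), Real.exp 1)) atTop (𝓝 (1, 1)) ∧
    limsup (fun k =>
        thompsonDist2 (f^[k] (Real.exp (-1), Real.exp 1)) (1, 1) ^ ((k : ℝ)⁻¹)) atTop = 1 := by
  have hfx : ∀ b : ℝ, f (Real.exp (-b), Real.exp b)
      = (Real.exp (-(Real.arctan b)), Real.exp (Real.arctan b)) := by
    intro b
    have e1 : ((-b) + b)/2 = (0:ℝ) := by ring
    have e2 : (b - (-b))/2 = b := by ring
    rw [hf]
    simp only [Real.log_exp]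
    rw [hT]
    simp only
    rw [e1, e2, zero_sub, zero_add]
  have hiter : ∀ k : ℕ, f^[k] (Real.exp (-1), Real.exp 1)
      = (Real.exp (-(aseq k)), Real.exp (aseq k)) := by
    intro k
    induction k with
    | zero => simp [aseq_zero]
    | succ n ih => rw [Function.iterate_succ_apply', ih, hfx, aseq_succ]
  refine ⟨?_, ?_, ?_, ?_, ?_⟩
  · -- order preserving
    intro p q hp1 hp2 hq1 hq2 hpq
    obtain ⟨h1, h2⟩ := Prod.le_def.1 hpq
    have hu1 : Real.log p.1 ≤ Real.log q.1 := Real.log_le_log hp1 h1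
    have hu2 : Real.log p.2 ≤ Real.log q.2 := Real.log_le_log hp2 h2
    rw [hf p, hf q, Prod.mk_le_mk, hT, hT]
    simp only
    constructor
    · rw [Real.exp_le_exp]
      rcases le_total ((Real.log p.2 - Real.log p.1)/2) ((Real.log q.2 - Real.log q.1)/2)
        with hc | hc
      · have := aux_arctan_sub_le hc; linarith
      · have := Real.arctan_strictMono.monotone hc; linarith
    · rw [Real.exp_le_exp]
      rcases le_total ((Real.log p.2 - Real.log p.1)/2) ((Real.log q.2 - Real.log q.1)/2)
        with hc | hc
      · have := Real.arctan_strictMono.monotone hc; linarith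
      · have := aux_arctan_sub_le hc; linarith
  · -- homogeneous
    intro p hp1 hp2 t ht
    have h1 : (t • p).1 = t * p.1 := rfl
    have h2 : (t • p).2 = t * p.2 := rfl
    have e : ∀ w : ℝ, Real.exp (Real.log t + w) = t * Real.exp w := by
      intro w; rw [Real.exp_add, Real.exp_log ht]
    have harg : ((Real.log t + Real.log p.2) - (Real.log t + Real.log p.1))/2
        = (Real.log p.2 - Real.log p.1)/2 := by ring
    rw [hf, hf, h1, h2, Real.log_mul ht.ne' hp1.ne', Real.log_mul ht.ne' hp2.ne', hT, hT]
    simp only [Prod.smul_mk, smul_eq_mul, Prod.mk.injEq]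
    rw [harg]
    constructor
    · rw [← e]; congr 1; ring
    · rw [← e]; congr 1; ring
  · -- fixed point
    rw [hf]
    norm_num [hT]
  · -- convergence
    simp only [hiter]
    have hneg : Tendsto (fun k => -aseq k) atTop (𝓝 0) := by simpa using aseq_tendsto.neg
    have h := ((Real.continuous_exp.tendsto 0).comp hneg).prodMk_nhds
      ((Real.continuous_exp.tendsto 0).comp aseq_tendsto)
    simpa using h
  · -- limsup
    have hcalc : (fun k : ℕ => thompsonDist2 (f^[k] (Real.exp (-1), Real.exp 1)) (1, 1)
        ^ ((k:ℝ)⁻¹)) = fun k : ℕ => aseq k ^ ((k:ℝ)⁻¹) := by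
      funext k
      rw [hiter k, thompson_calc (aseq_pos k).le]
    rw [hcalc]
    exact aseq_rpow_tendsto.limsup_eq
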